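/- Let X be a bipartite graph on n vertices whose adjacency matrix A has n distinct (i.e., all simple) eigenvalues. Then the rank of the average mixing matrix of X is at most ⌊(n+1)/2⌋. -/

import Mathlib

open Matrix BigOperators Module

lemma myRank_add_le {n : ℕ} (A B : Matrix (Fin n) (Fin n) ℝ) :
    (A + B).rank ≤ A.rank + B.rank := by
  have h : LinearMap.range (A + B).mulVecLin ≤
      LinearMap.range A.mulVecLin ⊔ LinearMap.range B.mulVecLin := by
    rintro x ⟨y, rfl⟩
    rw [Matrix.mulVecLin_add]
    exact Submodule.add_mem_sup ⟨y, rfl⟩ ⟨y, rfl⟩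
  calc (A + B).rank
      ≤ finrank ℝ ↥(LinearMap.range A.mulVecLin ⊔ LinearMap.range B.mulVecLin) :=
        Submodule.finrank_mono h
    _ ≤ A.rank + B.rank := Submodule.finrank_add_le_finrank_add_finrank _ _

lemma myRank_sum_le {n : ℕ} {ι : Type*} (s : Finset ι) (f : ι → Matrix (Fin n) (Fin n) ℝ) :
    (∑ i ∈ s, f i).rank ≤ ∑ i ∈ s, (f i).rank := by
  classical
  induction s using Finset.cons_induction with
  | empty => simp
  | cons a s ha ih =>
    rw [Finset.sum_cons, Finset.sum_cons]
    exact (myRank_add_le _ _).trans (Nat.add_le_add_left ih _)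

lemma myRank_vecMulVec_le {n : ℕ} (u v : Fin n → ℝ) : (vecMulVec u v).rank ≤ 1 := by
  rw [vecMulVec_eq Unit u v]
  refine (Matrix.rank_mul_le_left _ _).trans ?_
  simpa using Matrix.rank_le_card_width (Matrix.replicateCol Unit u)

lemma exists_outer {n : ℕ} (M : Matrix (Fin n) (Fin n) ℝ) (h : M.rank = 1) :
    ∃ u v : Fin n → ℝ, ∀ a b, M a b = u a * v b := by
  rw [Matrix.rank, finrank_eq_one_iff'] at h
  obtain ⟨w, -, hw⟩ := h
  have hcol : ∀ b : Fin n, ∃ c : ℝ, c • (w : Fin n → ℝ) = M *ᵥ Pi.single b 1 := by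
    intro b
    obtain ⟨c, hc⟩ := hw ⟨M *ᵥ Pi.single b 1, ⟨Pi.single b 1, rfl⟩⟩
    exact ⟨c, congrArg Subtype.val hc⟩
  choose t ht using hcol
  refine ⟨fun a => (w : Fin n → ℝ) a, t, fun a b => ?_⟩
  have := congrFun (ht b) a
  simp only [Matrix.mulVec_single_one, Matrix.col_apply, mul_one, Pi.smul_apply, smul_eq_mul] at this
  rw [← this, mul_comm]

/-- If `X` is a bipartite graph on `n` vertices whose adjacency matrix has all simple
eigenvalues, then the rank of its average mixing matrix `∑ r, E r ⊙ E r` is at most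
`⌊(n+1)/2⌋`. -/
theorem rank_avg_mixing_le_of_bipartite_simple_eigenvalues (n : ℕ)
    (G : SimpleGraph (Fin n)) [DecidableRel G.Adj]
    (hbip : G.Colorable 2)
    (θ : Fin n → ℝ) (hθ : Function.Injective θ)
    (E : Fin n → Matrix (Fin n) (Fin n) ℝ)
    (hEsymm : ∀ r, (E r)ᵀ = E r)
    (hEidem : ∀ r, E r * E r = E r)
    (hEorth : ∀ r s, r ≠ s → E r * E s = 0)
    (hEsum : ∑ r, E r = 1)
    (hErank : ∀ r, (E r).rank = 1)
    (hdecomp : G.adjMatrix ℝ = ∑ r, θ r • E r) :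
    (∑ r, E r ⊙ E r).rank ≤ (n + 1) / 2 := by
  classical
  obtain ⟨C⟩ := hbip
  set A : Matrix (Fin n) (Fin n) ℝ := G.adjMatrix ℝ with hA
  -- the sign vector and sign matrix
  set d : Fin n → ℝ := fun i => if C i = 0 then 1 else -1 with hd
  have hd2 : ∀ i, d i * d i = 1 := by
    intro i; simp only [hd]; split_ifs <;> norm_num
  set D : Matrix (Fin n) (Fin n) ℝ := Matrix.diagonal d with hD
  have hDD : D * D = 1 := by
    rw [hD, Matrix.diagonal_mul_diagonal]
    ext i j
    rcases eq_or_ne i j with rfl | h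
    · simp [hd2]
    · simp [Matrix.diagonal_apply_ne _ h, Matrix.one_apply_ne h]
  have hDT : Dᵀ = D := Matrix.diagonal_transpose d
  -- D A D = -A
  have hDAD : D * A * D = -A := by
    ext i j
    have : (D * A * D) i j = d i * A i j * d j := by
      rw [hD, Matrix.mul_diagonal, Matrix.diagonal_mul]
    rw [this]
    by_cases h : G.Adj i j
    · have hne : C i ≠ C j := C.valid h
      have h2 : ∀ x : Fin 2, x = 0 ∨ x = 1 := by decide
      have hdij : d i * d j = -1 := by
        rcases h2 (C i) with h1 | h1 <;> rcases h2 (C j) with h3 | h3 <;>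
          simp [hd, h1, h3] at hne ⊢
      have : A i j = 1 := by simp [hA, h]
      rw [this]; simp only [Matrix.neg_apply, SimpleGraph.adjMatrix_apply, hA]
      rw [mul_one]; simp [h, hdij]
    · have : A i j = 0 := by simp [hA, h]
      rw [this]; simp [hA, h]
  have hDA : D * A = -(A * D) := by
    have := congrArg (· * D) hDAD
    simpa [mul_assoc, hDD, neg_mul] using this
  -- eigen-equations
  have hE_A : ∀ r, E r * A = θ r • E r := by
    intro r
    rw [hdecomp, Finset.mul_sum]
    rw [Finset.sum_eq_single r]
    · rw [mul_smul_comm, hEidem]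
    · intro s _ hs
      rw [mul_smul_comm, hEorth r s (Ne.symm hs), smul_zero]
    · intro h; exact absurd (Finset.mem_univ r) h
  have hA_E : ∀ r, A * E r = θ r • E r := by
    intro r
    rw [hdecomp, Finset.sum_mul]
    rw [Finset.sum_eq_single r]
    · rw [smul_mul_assoc, hEidem]
    · intro s _ hs
      rw [smul_mul_assoc, hEorth s r hs, smul_zero]
    · intro h; exact absurd (Finset.mem_univ r) h
  -- trace of each idempotent is 1
  have htrace : ∀ r, Matrix.trace (E r) = 1 := by
    intro r
    obtain ⟨u, v, huv⟩ := exists_outer (E r) (hErank r)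
    have hne : E r ≠ 0 := by
      intro h0
      have := hErank r
      rw [h0, Matrix.rank_zero] at this
      exact one_ne_zero this.symm
    obtain ⟨a, b, hab⟩ : ∃ a b, E r a b ≠ 0 := by
      by_contra h
      push_neg at h
      exact hne (by ext a b; simp [h a b])
    have hsum1 : (∑ k, v k * u k) = 1 := by
      have h1 : (E r * E r) a b = E r a b := by rw [hEidem]
      rw [Matrix.mul_apply] at h1
      simp only [huv] at h1 hab
      have h2 : (∑ k, v k * u k) * (u a * v b) = u a * v b := by
        calc (∑ k, v k * u k) * (u a * v b)
            = ∑ k, u a * v k * (u k * v b) := by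
              rw [Finset.sum_mul]
              exact Finset.sum_congr rfl fun k _ => by ring
          _ = u a * v b := h1
      exact mul_right_cancel₀ hab (h2.trans (one_mul _).symm)
    rw [Matrix.trace]
    simp only [Matrix.diag]
    rw [← hsum1]
    exact Finset.sum_congr rfl fun k _ => by rw [huv]; ring
  -- the pairing
  have key : ∀ r, ∃ s, θ s = -θ r ∧ E s = D * E r * D := by
    intro r
    set F : Matrix (Fin n) (Fin n) ℝ := D * E r * D with hF
    have hFA : F * A = (-θ r) • F := by
      rw [hF]
      calc D * E r * D * A = D * (E r * (D * A)) := by simp only [mul_assoc]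
        _ = D * (E r * (-(A * D))) := by rw [hDA]
        _ = -(D * (E r * A) * D) := by simp only [mul_neg, neg_mul, mul_assoc]
        _ = -(D * (θ r • E r) * D) := by rw [hE_A]
        _ = (-θ r) • (D * E r * D) := by
            simp only [mul_smul_comm, smul_mul_assoc, neg_smul, mul_assoc]
    have hFE0 : ∀ s, θ s ≠ -θ r → F * E s = 0 := by
      intro s hs
      have h1 : F * A * E s = θ s • (F * E s) := by
        rw [mul_assoc, hA_E, mul_smul_comm]
      have h2 : F * A * E s = (-θ r) • (F * E s) := by rw [hFA, smul_mul_assoc]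
      have h3 : (θ s - -θ r) • (F * E s) = 0 := by
        rw [sub_smul, ← h1, ← h2, sub_self]
      have hne : θ s - -θ r ≠ 0 := sub_ne_zero.mpr hs
      exact (smul_eq_zero.mp h3).resolve_left hne
    have hDFD : D * F * D = E r := by
      rw [hF]
      calc D * (D * E r * D) * D = D * D * (E r * (D * D)) := by simp only [mul_assoc]
        _ = E r := by rw [hDD, mul_one, one_mul]
    have hFne : F ≠ 0 := by
      intro h0
      have hE0 : E r = 0 := by rw [← hDFD, h0, mul_zero, zero_mul]
      have := hErank r
      rw [hE0, Matrix.rank_zero] at this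
      exact one_ne_zero this.symm
    have hex : ∃ s, θ s = -θ r := by
      by_contra hno
      push_neg at hno
      apply hFne
      have h1 : F = F * (∑ s, E s) := by rw [hEsum, mul_one]
      rw [h1, Finset.mul_sum]
      exact Finset.sum_eq_zero fun s _ => hFE0 s (hno s)
    obtain ⟨s, hs⟩ := hex
    refine ⟨s, hs, ?_⟩
    have hFEs : F * E s = F := by
      have h1 : F = ∑ t, F * E t := by rw [← Finset.mul_sum, hEsum, mul_one]
      have h2 : ∑ t, F * E t = F * E s :=
        Finset.sum_eq_single s
          (fun t _ ht => hFE0 t fun hc => ht (hθ (hc.trans hs.symm)))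
          (fun h => absurd (Finset.mem_univ s) h)
      exact (h1.trans h2).symm
    have hFsymm : Fᵀ = F := by
      rw [hF, Matrix.transpose_mul, Matrix.transpose_mul, hDT, hEsymm]
      simp only [mul_assoc]
    have hEsF : E s * F = F := by
      have h1 := congrArg Matrix.transpose hFEs
      rw [Matrix.transpose_mul, hEsymm, hFsymm] at h1
      exact h1
    have hFF : F * F = F := by
      rw [hF]
      calc D * E r * D * (D * E r * D) = D * (E r * ((D * D) * (E r * D))) := by
            simp only [mul_assoc]
        _ = D * (E r * (E r * D)) := by rw [hDD, one_mul]
        _ = D * ((E r * E r) * D) := by rw [← mul_assoc (E r)]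
        _ = D * E r * D := by rw [hEidem, ← mul_assoc]
    have hPP : (E s - F) * (E s - F) = E s - F := by
      rw [sub_mul, mul_sub, mul_sub, hEidem, hEsF, hFEs, hFF]
      abel
    have hPsymm : (E s - F)ᵀ = E s - F := by
      rw [Matrix.transpose_sub, hEsymm, hFsymm]
    have htrF : Matrix.trace F = 1 := by
      rw [hF, Matrix.trace_mul_cycle, hDD, one_mul, htrace r]
    have htrP : Matrix.trace (E s - F) = 0 := by
      rw [Matrix.trace_sub, htrace s, htrF, sub_self]
    have hP0 : E s - F = 0 := by
      have hsq : ∑ i, ∑ j, (E s - F) j i * (E s - F) j i = 0 := by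
        have h1 : Matrix.trace ((E s - F)ᵀ * (E s - F)) = 0 := by
          rw [hPsymm, hPP, htrP]
        rw [Matrix.trace] at h1
        simpa [Matrix.diag, Matrix.mul_apply, Matrix.transpose_apply] using h1
      ext a b
      have h2 := (Finset.sum_eq_zero_iff_of_nonneg
        (fun i _ => Finset.sum_nonneg fun j _ => mul_self_nonneg _)).mp hsq
      have h3 := (Finset.sum_eq_zero_iff_of_nonneg
        (fun j _ => mul_self_nonneg _)).mp (h2 b (Finset.mem_univ b))
      have h4 := h3 a (Finset.mem_univ a)
      simpa using mul_self_eq_zero.mp h4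
    exact sub_eq_zero.mp hP0
  -- choose the pairing involution
  choose σ hσθ hσE using key
  have hσσ : ∀ r, σ (σ r) = r := fun r => hθ (by rw [hσθ, hσθ, neg_neg])
  set f : Fin n → Matrix (Fin n) (Fin n) ℝ := fun r => E r ⊙ E r with hf
  have hfσ : ∀ r, f (σ r) = f r := by
    intro r
    ext a b
    show (E (σ r) ⊙ E (σ r)) a b = (E r ⊙ E r) a b
    rw [Matrix.hadamard_apply, Matrix.hadamard_apply, hσE r]
    have h1 : (D * E r * D) a b = d a * E r a b * d b := by
      rw [hD, Matrix.mul_diagonal, Matrix.diagonal_mul]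
    rw [h1]
    calc (d a * E r a b * d b) * (d a * E r a b * d b)
        = (d a * d a) * (d b * d b) * (E r a b * E r a b) := by ring
      _ = E r a b * E r a b := by rw [hd2 a, hd2 b, one_mul, one_mul]
  -- outer-product representation of the Schur squares
  have houter : ∀ r, ∃ u v : Fin n → ℝ, f r = vecMulVec u v := by
    intro r
    obtain ⟨u, v, huv⟩ := exists_outer (E r) (hErank r)
    refine ⟨fun a => u a * u a, fun b => v b * v b, ?_⟩
    ext a b
    show (E r ⊙ E r) a b = _
    rw [Matrix.hadamard_apply, Matrix.vecMulVec_apply, huv]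
    ring
  -- the counting sets
  set S : Finset (Fin n) := Finset.univ.filter (fun r => r ≤ σ r) with hS
  set T : Finset (Fin n) := Finset.univ.filter (fun r => r < σ r) with hT
  set Cpl : Finset (Fin n) := Finset.univ.filter (fun r => ¬ r ≤ σ r) with hCpl
  set Fix : Finset (Fin n) := Finset.univ.filter (fun r => σ r = r) with hFix
  have hTS : T ⊆ S := by
    intro r hr
    rw [hT, Finset.mem_filter] at hr
    rw [hS, Finset.mem_filter]
    exact ⟨hr.1, le_of_lt hr.2⟩
  have hCT : ∑ r ∈ Cpl, f r = ∑ r ∈ T, f r := by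
    refine Finset.sum_bij (fun r _ => σ r) ?_ ?_ ?_ ?_
    · intro a ha
      rw [hCpl, Finset.mem_filter, not_le] at ha
      rw [hT, Finset.mem_filter]
      refine ⟨Finset.mem_univ _, ?_⟩
      show σ a < σ (σ a)
      rw [hσσ a]
      exact ha.2
    · intro a _ b _ hab
      have := congrArg σ hab
      rwa [hσσ, hσσ] at this
    · intro t ht
      rw [hT, Finset.mem_filter] at ht
      refine ⟨σ t, ?_, hσσ t⟩
      rw [hCpl, Finset.mem_filter, not_le, hσσ]
      exact ⟨Finset.mem_univ _, ht.2⟩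
    · intro a _
      exact (hfσ a).symm
  have hcardCT : Cpl.card = T.card := by
    refine Finset.card_bij (fun r _ => σ r) ?_ ?_ ?_
    · intro a ha
      rw [hCpl, Finset.mem_filter, not_le] at ha
      rw [hT, Finset.mem_filter]
      refine ⟨Finset.mem_univ _, ?_⟩
      show σ a < σ (σ a)
      rw [hσσ a]
      exact ha.2
    · intro a _ b _ hab
      have := congrArg σ hab
      rwa [hσσ, hσσ] at this
    · intro t ht
      rw [hT, Finset.mem_filter] at ht
      refine ⟨σ t, ?_, hσσ t⟩
      rw [hCpl, Finset.mem_filter, not_le, hσσ]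
      exact ⟨Finset.mem_univ _, ht.2⟩
  have hFix1 : Fix.card ≤ 1 := by
    rw [Finset.card_le_one]
    intro a ha b hb
    rw [hFix, Finset.mem_filter] at ha hb
    have h1 : θ a = 0 := by
      have := hσθ a
      rw [ha.2] at this
      linarith
    have h2 : θ b = 0 := by
      have := hσθ b
      rw [hb.2] at this
      linarith
    exact hθ (h1.trans h2.symm)
  have hSTF : S = T ∪ Fix := by
    ext r
    rw [hS, hT, hFix, Finset.mem_union, Finset.mem_filter, Finset.mem_filter,
      Finset.mem_filter]
    constructor
    · intro h
      rcases lt_or_eq_of_le h.2 with h' | h'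
      · exact Or.inl ⟨h.1, h'⟩
      · exact Or.inr ⟨h.1, h'.symm⟩
    · rintro (h | h)
      · exact ⟨h.1, le_of_lt h.2⟩
      · exact ⟨h.1, le_of_eq h.2.symm⟩
  have hdisjTF : Disjoint T Fix := by
    rw [Finset.disjoint_left]
    intro a ha hb
    rw [hT, Finset.mem_filter] at ha
    rw [hFix, Finset.mem_filter] at hb
    rw [hb.2] at ha
    exact lt_irrefl a ha.2
  have hScard : S.card = T.card + Fix.card := by
    rw [hSTF, Finset.card_union_of_disjoint hdisjTF]
  have hcardtot : S.card + Cpl.card = n := by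
    rw [hS, hCpl]
    rw [Finset.card_filter_add_card_filter_not]
    exact Finset.card_fin n
  -- rewrite the total sum over S
  have hsplit : ∑ r, f r = ∑ r ∈ S, f r + ∑ r ∈ Cpl, f r := by
    rw [hS, hCpl]
    exact (Finset.sum_filter_add_sum_filter_not Finset.univ _ f).symm
  have htotal : ∑ r, f r = ∑ r ∈ S, (f r + if r ∈ T then f r else 0) := by
    rw [Finset.sum_add_distrib, hsplit, hCT]
    congr 1
    rw [Finset.sum_ite_mem, Finset.inter_eq_right.mpr hTS]
  -- rank bound of each summand
  have hgrank : ∀ r, (f r + if r ∈ T then f r else 0).rank ≤ 1 := by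
    intro r
    obtain ⟨u, v, huv⟩ := houter r
    split_ifs
    · have h1 : f r + f r = vecMulVec (fun a => u a + u a) v := by
        ext a b
        rw [Matrix.add_apply, huv, Matrix.vecMulVec_apply, Matrix.vecMulVec_apply]
        ring
      rw [h1]
      exact myRank_vecMulVec_le _ _
    · rw [add_zero, huv]
      exact myRank_vecMulVec_le _ _
  calc (∑ r, f r).rank
      = (∑ r ∈ S, (f r + if r ∈ T then f r else 0)).rank := by rw [htotal]
    _ ≤ ∑ r ∈ S, (f r + if r ∈ T then f r else 0).rank := myRank_sum_le _ _
    _ ≤ ∑ _r ∈ S, 1 := Finset.sum_le_sum fun r _ => hgrank r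
    _ = S.card := by simp
    _ ≤ (n + 1) / 2 := by omega
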